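/- Let X be a compact geodesic metric space and ω : ℝ≥0 → ℝ≥0 a non-decreasing function such that it is NOT the case that δ = O(ω(δ)) as δ → 0 (i.e., for every C > 0 there exist arbitrarily small δ > 0 with δ > C·ω(δ)). Then every ω-continuous function f : X → ℝⁿ is constant. -/

import Mathlib

open Metric

/-- A metric space is geodesic if any two points are joined by a continuous shortest path,
parametrized by arclength, of length equal to their distance. -/
def IsGeodesicSpace (X : Type*) [MetricSpace X] : Prop :=
  ∀ x y : X, ∃ γ : ℝ → X, γ 0 = x ∧ γ (dist x y) = y ∧
    ∀ s ∈ Set.Icc (0 : ℝ) (dist x y), ∀ t ∈ Set.Icc (0 : ℝ) (dist x y),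
      dist (γ s) (γ t) = |s - t|

/-- If `X` is a compact geodesic space and `ω : ℝ≥0 → ℝ≥0` is non-decreasing and it is *not*
the case that `δ = O(ω(δ))` as `δ → 0` (i.e. for every `C > 0` there are arbitrarily small
`δ > 0` with `δ > C·ω(δ)`), then every `ω`-continuous function `f : X → ℝⁿ`
(for the sup norm on `ℝⁿ`) is constant. -/
theorem omega_continuous_constant {X : Type*} [MetricSpace X] [CompactSpace X]
    (hgeo : IsGeodesicSpace X) (n : ℕ) (ω : NNReal → NNReal) (hmono : Monotone ω)
    (hnotO : ∀ C : NNReal, 0 < C → ∀ δ₀ : NNReal, 0 < δ₀ →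
      ∃ δ : NNReal, 0 < δ ∧ δ ≤ δ₀ ∧ C * ω δ < δ)
    (f : X → (Fin n → ℝ)) (hf : ∀ x y : X, ‖f x - f y‖₊ ≤ ω (nndist x y)) :
    ∀ x y : X, f x = f y := by
  intro x y
  by_cases hxy : x = y
  · rw [hxy]
  have hDpos : 0 < dist x y := dist_pos.mpr hxy
  set d : ℝ := dist x y with hd
  have hdpos : (0:ℝ) < d := hDpos
  obtain ⟨γ, hγ0, hγD, hγdist⟩ := hgeo x y
  have key : ∀ ε : ℝ, 0 < ε → ‖f y - f x‖ ≤ ε := by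
    intro ε hε
    -- choose C and δ₀
    have hCpos : 0 < (2 * nndist x y / ε.toNNReal : NNReal) := by
      have h1 : (0:NNReal) < nndist x y := by
        simpa [pos_iff_ne_zero, nndist_eq_zero] using hxy
      have h2 : (ε.toNNReal : NNReal) ≠ 0 := by
        simp [Real.toNNReal_eq_zero, not_le, hε]
      positivity
    have hδ₀pos : 0 < nndist x y := by
      simpa [pos_iff_ne_zero, nndist_eq_zero] using hxy
    obtain ⟨δ, hδpos, hδle, hδC⟩ := hnotO _ hCpos _ hδ₀pos
    have hδ'pos : (0:ℝ) < (δ:ℝ) := hδpos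
    have hδ'led : (δ:ℝ) ≤ d := by
      have := (NNReal.coe_le_coe).mpr hδle
      simpa [coe_nndist] using this
    set w : ℝ := (ω δ : ℝ) with hw
    have hwnn : 0 ≤ w := (ω δ).coe_nonneg
    -- the key inequality from hδC, in ℝ
    have hkey : 2 * d * w < (δ:ℝ) * ε := by
      have := (NNReal.coe_lt_coe).mpr hδC
      rw [NNReal.coe_mul, NNReal.coe_div, NNReal.coe_mul] at this
      rw [Real.coe_toNNReal _ hε.le, coe_nndist, ← hd] at this
      have h2 : 2 * d * w / ε < (δ:ℝ) := by
        have e : 2 * d * w / ε = 2 * d / ε * w := by ring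
        rw [e]; exact this
      calc 2 * d * w = (2 * d * w / ε) * ε := by field_simp
        _ < (δ:ℝ) * ε := by exact mul_lt_mul_of_pos_right h2 hε
    -- number of subdivisions
    set N : ℕ := ⌈d / δ⌉₊ with hN
    have hNpos : 0 < N := Nat.ceil_pos.mpr (by positivity)
    have hNge : d / δ ≤ (N:ℝ) := Nat.le_ceil _
    have hNle : (N:ℝ) ≤ d / δ + 1 := (Nat.ceil_lt_add_one (by positivity)).le
    set h : ℝ := d / N with hh
    have hhpos : 0 < h := by positivity
    have hhle : h ≤ (δ:ℝ) := by
      rw [hh, div_le_iff₀ (by positivity)]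
      calc d = (d / δ) * δ := by field_simp
        _ ≤ (N:ℝ) * δ := by exact mul_le_mul_of_nonneg_right hNge hδ'pos.le
        _ = (δ:ℝ) * N := mul_comm _ _
    -- points on the geodesic
    have hmem : ∀ i : ℕ, i ≤ N → (i:ℝ) * h ∈ Set.Icc (0:ℝ) d := by
      intro i hi
      constructor
      · positivity
      · calc (i:ℝ) * h ≤ (N:ℝ) * h := by
              exact mul_le_mul_of_nonneg_right (by exact_mod_cast hi) hhpos.le
          _ = d := by rw [hh]; field_simp
    -- telescoping
    have htel : f y - f x = ∑ i ∈ Finset.range N,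
        (f (γ (((i:ℕ)+1 : ℕ) * h)) - f (γ ((i:ℕ) * h))) := by
      rw [Finset.sum_range_sub (fun i : ℕ => f (γ ((i:ℝ) * h)))]
      have hNh : (N:ℝ) * h = d := by rw [hh]; field_simp
      simp [hNh, hγ0, hγD]
      rw [hd, hγD]
    -- bound each term
    have hterm : ∀ i ∈ Finset.range N,
        ‖f (γ (((i:ℕ)+1 : ℕ) * h)) - f (γ ((i:ℕ) * h))‖ ≤ w := by
      intro i hi
      rw [Finset.mem_range] at hi
      have h1 := hmem (i+1) hi
      have h2 := hmem i hi.le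
      have hdist : dist (γ (((i:ℕ)+1 : ℕ) * h)) (γ ((i:ℕ) * h)) = h := by
        rw [hγdist _ (by exact_mod_cast h1) _ h2]
        push_cast
        have e : ((i:ℝ) + 1) * h - (i:ℝ) * h = h := by ring
        rw [e, abs_of_nonneg hhpos.le]
      have hnd : nndist (γ (((i:ℕ)+1 : ℕ) * h)) (γ ((i:ℕ) * h)) ≤ δ := by
        rw [← NNReal.coe_le_coe, coe_nndist, hdist]
        exact hhle
      calc ‖f (γ (((i:ℕ)+1 : ℕ) * h)) - f (γ ((i:ℕ) * h))‖
          = (‖f (γ (((i:ℕ)+1 : ℕ) * h)) - f (γ ((i:ℕ) * h))‖₊ : ℝ) := rfl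
        _ ≤ (ω (nndist (γ (((i:ℕ)+1 : ℕ) * h)) (γ ((i:ℕ) * h))) : ℝ) := by
            exact_mod_cast hf _ _
        _ ≤ w := by exact_mod_cast hmono hnd
    calc ‖f y - f x‖ = ‖∑ i ∈ Finset.range N,
          (f (γ (((i:ℕ)+1 : ℕ) * h)) - f (γ ((i:ℕ) * h)))‖ := by rw [htel]
      _ ≤ ∑ i ∈ Finset.range N, ‖f (γ (((i:ℕ)+1 : ℕ) * h)) - f (γ ((i:ℕ) * h))‖ :=
          norm_sum_le _ _
      _ ≤ ∑ _i ∈ Finset.range N, w := Finset.sum_le_sum hterm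
      _ = (N:ℝ) * w := by simp [mul_comm]
      _ ≤ ε := by
          have h1 : (N:ℝ) * w * (δ:ℝ) ≤ (d / δ + 1) * w * (δ:ℝ) := by
            apply mul_le_mul_of_nonneg_right (mul_le_mul_of_nonneg_right hNle hwnn) hδ'pos.le
          have h2 : (d / δ + 1) * w * (δ:ℝ) = d * w + w * δ := by field_simp
          have h3 : w * (δ:ℝ) ≤ w * d := mul_le_mul_of_nonneg_left hδ'led hwnn
          nlinarith [hkey, hδ'pos]
  have : ‖f y - f x‖ = 0 := by
    have h0 : ‖f y - f x‖ ≤ 0 := le_of_forall_pos_le_add (by intro ε hε; simpa using key ε hε)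
    linarith [norm_nonneg (f y - f x)]
  have := norm_eq_zero.mp this
  have := sub_eq_zero.mp this
  exact this.symm
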